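/- Let d, n ≥ 1, let f_1, …, f_n : ℝ^d → ℝ be differentiable with f := (1/n)∑_{i=1}^n f_i, suppose the family is average L-smooth for some L > 0, i.e. (1/n)∑_{i=1}^n ‖∇f_i(x) − ∇f_i(y)‖² ≤ L²‖x − y‖² for all x, y, and suppose the bounded-variance condition (1/n)∑_{i=1}^n ‖∇f_i(x) − ∇f(x)‖² ≤ σ² holds for all x ∈ ℝ^d, where σ ≥ 0. Let x, x', g ∈ ℝ^d, let b, b' ≥ 1 be integers and p ∈ (0, 1]. Then p · (1/n^b) ∑_{i ∈ {1,…,n}^b} ‖(1/b)∑_{k=1}^{b} ∇f_{i_k}(x') − ∇f(x')‖² + (1 − p) · (1/n^{b'}) ∑_{j ∈ {1,…,n}^{b'}} ‖ g + (1/b')∑_{k=1}^{b'} (∇f_{j_k}(x') − ∇f_{j_k}(x)) − ∇f(x') ‖² ≤ p σ²/b + ((1 − p) L²/b')‖x' − x‖² + (1 − p)‖g − ∇f(x)‖². -/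

import Mathlib

open scoped RealInnerProductSpace BigOperators


lemma aux_sum_eval {α : Type*} [Fintype α] [DecidableEq α] {n : ℕ} (k : α) (φ : Fin n → ℝ) :
    ∑ i : α → Fin n, φ (i k)
      = (Fintype.card ({j : α // j ≠ k} → Fin n) : ℝ) * ∑ j, φ j := by
  rw [← Equiv.sum_comp (Equiv.funSplitAt k (Fin n)).symm (fun i => φ (i k))]
  simp [Fintype.sum_prod_type, Finset.mul_sum]

lemma aux_sum_pair {α : Type*} [Fintype α] [DecidableEq α] {n : ℕ} (k l : α) (h : k ≠ l)
    (ψ : Fin n → Fin n → ℝ) (h0 : ∀ a, ∑ j, ψ a j = 0) :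
    ∑ i : α → Fin n, ψ (i k) (i l) = 0 := by
  rw [← Equiv.sum_comp (Equiv.funSplitAt l (Fin n)).symm (fun i => ψ (i k) (i l))]
  simp only [Fintype.sum_prod_type, Equiv.funSplitAt_symm_apply, dif_pos rfl, dif_neg h]
  rw [Finset.sum_comm]
  simp [h0]

lemma aux_exp {E : Type*} [NormedAddCommGroup E] [InnerProductSpace ℝ E] {n b : ℕ}
    (hn : 1 ≤ n) (hb : 1 ≤ b) (c : E) (w : Fin n → E) (hw : ∑ j, w j = 0) :
    (1 / (n : ℝ) ^ b) * ∑ i : Fin b → Fin n, ‖c + (1 / (b : ℝ)) • ∑ k, w (i k)‖ ^ 2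
      = ‖c‖ ^ 2 + (1 / ((n : ℝ) * b)) * ∑ j, ‖w j‖ ^ 2 := by
  have hb0 : (b : ℝ) ≠ 0 := Nat.cast_ne_zero.mpr (by omega)
  have hn0 : (n : ℝ) ≠ 0 := Nat.cast_ne_zero.mpr (by omega)
  have hinner0 : ∀ a : Fin n, ∑ j, ⟪w a, w j⟫ = 0 := by
    intro a; rw [← inner_sum, hw, inner_zero_right]
  have hcinner0 : ∑ j, ⟪c, w j⟫ = 0 := by
    rw [← inner_sum, hw, inner_zero_right]
  have hcard : ∀ k : Fin b, (Fintype.card ({j : Fin b // j ≠ k} → Fin n) : ℝ)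
      = (n : ℝ) ^ (b - 1) := by
    intro k
    rw [Fintype.card_fun]
    simp [Fintype.card_subtype_compl]
  have key1 : ∀ k : Fin b, ∑ i : Fin b → Fin n, ⟪c, w (i k)⟫ = 0 := by
    intro k
    rw [aux_sum_eval k (fun j => ⟪c, w j⟫), hcinner0, mul_zero]
  have key2 : ∀ k : Fin b, ∑ i : Fin b → Fin n, ⟪w (i k), w (i k)⟫
      = (n : ℝ) ^ (b - 1) * ∑ j, ⟪w j, w j⟫ := by
    intro k
    rw [aux_sum_eval k (fun j => ⟪w j, w j⟫), hcard]
  have key3 : ∀ k l : Fin b, k ≠ l → ∑ i : Fin b → Fin n, ⟪w (i k), w (i l)⟫ = 0 := by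
    intro k l h
    exact aux_sum_pair k l h (fun a c => ⟪w a, w c⟫) hinner0
  have hexpand : ∀ i : Fin b → Fin n, ‖c + (1 / (b : ℝ)) • ∑ k, w (i k)‖ ^ 2
      = ‖c‖ ^ 2 + (2 * (1 / (b : ℝ))) * ∑ k, ⟪c, w (i k)⟫
        + (1 / (b : ℝ)) ^ 2 * ∑ k, ∑ l, ⟪w (i k), w (i l)⟫ := by
    intro i
    rw [norm_add_sq_real, ← real_inner_self_eq_norm_sq ((1 / (b : ℝ)) • ∑ k, w (i k))]
    simp only [real_inner_smul_left, real_inner_smul_right, inner_sum, sum_inner,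
      Finset.mul_sum]
    ring_nf
    congr 1
    · congr 1
      funext x
      exact Finset.sum_congr rfl fun y _ => by rw [real_inner_comm (w (i x)) (w (i y))]
  simp only [hexpand]
  rw [Finset.sum_add_distrib, Finset.sum_add_distrib, Finset.sum_const, Finset.card_univ]
  have hB : ∑ i : Fin b → Fin n, (2 * (1 / (b : ℝ))) * ∑ k, ⟪c, w (i k)⟫ = 0 := by
    rw [← Finset.mul_sum, Finset.sum_comm]
    simp [key1]
  have hC : ∑ i : Fin b → Fin n, (1 / (b : ℝ)) ^ 2 * ∑ k, ∑ l, ⟪w (i k), w (i l)⟫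
      = (1 / (b : ℝ)) ^ 2 * (b * ((n : ℝ) ^ (b - 1) * ∑ j, ‖w j‖ ^ 2)) := by
    rw [← Finset.mul_sum, Finset.sum_comm]
    have hthis : ∀ k ∈ (Finset.univ : Finset (Fin b)),
        (∑ i : Fin b → Fin n, ∑ l : Fin b, ⟪w (i k), w (i l)⟫)
        = (n : ℝ) ^ (b - 1) * ∑ j, ‖w j‖ ^ 2 := by
      intro k _
      rw [Finset.sum_comm, Finset.sum_eq_single k]
      · rw [key2]; simp [real_inner_self_eq_norm_sq]
      · intro l _ hl
        exact key3 k l (Ne.symm hl)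
      · simp
    rw [Finset.sum_congr rfl hthis, Finset.sum_const, Finset.card_univ, Fintype.card_fin,
      nsmul_eq_mul]
  rw [hB, hC, Fintype.card_fun]
  simp only [Fintype.card_fin, nsmul_eq_mul]
  have hnb : (n : ℝ) ^ b = (n : ℝ) * (n : ℝ) ^ (b - 1) := by
    rw [← pow_succ']
    congr 1
    omega
  push_cast
  rw [hnb]
  field_simp
  ring

lemma grad_avg {d n : ℕ} (f : Fin n → EuclideanSpace ℝ (Fin d) → ℝ)
    (hf : ∀ i, Differentiable ℝ (f i)) (y : EuclideanSpace ℝ (Fin d)) :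
    gradient (fun x => (1 / (n : ℝ)) * ∑ i, f i x) y
      = (1 / (n : ℝ)) • ∑ i, gradient (f i) y := by
  have h1 : ∀ i : Fin n, HasFDerivAt (f i)
      (InnerProductSpace.toDual ℝ _ (gradient (f i) y)) y :=
    fun i => hasGradientAt_iff_hasFDerivAt.mp ((hf i y).hasGradientAt)
  have h2 : HasFDerivAt (fun x => ∑ i, f i x)
      (∑ i, InnerProductSpace.toDual ℝ _ (gradient (f i) y)) y :=
    HasFDerivAt.fun_sum fun i _ => h1 i
  have h3 := h2.const_mul ((1 : ℝ) / n)
  have h4 : HasGradientAt (fun x => (1 / (n : ℝ)) * ∑ i, f i x)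
      ((1 / (n : ℝ)) • ∑ i, gradient (f i) y) y := by
    rw [hasGradientAt_iff_hasFDerivAt]
    convert h3 using 1
    · rfl
    simp [map_smul, map_sum]
  exact h4.gradient


theorem stmt_6 (d n : ℕ) (hd : 1 ≤ d) (hn : 1 ≤ n)
    (f : Fin n → EuclideanSpace ℝ (Fin d) → ℝ)
    (hf : ∀ i, Differentiable ℝ (f i))
    (F : EuclideanSpace ℝ (Fin d) → ℝ)
    (hF : F = fun x => (1 / (n : ℝ)) * ∑ i, f i x)
    (L : ℝ) (hL : 0 < L)
    (havg : ∀ x y : EuclideanSpace ℝ (Fin d),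
      (1 / (n : ℝ)) * ∑ i, ‖gradient (f i) x - gradient (f i) y‖ ^ 2
        ≤ L ^ 2 * ‖x - y‖ ^ 2)
    (σ : ℝ) (hσ : 0 ≤ σ)
    (hbv : ∀ x : EuclideanSpace ℝ (Fin d),
      (1 / (n : ℝ)) * ∑ i, ‖gradient (f i) x - gradient F x‖ ^ 2 ≤ σ ^ 2)
    (x x' g : EuclideanSpace ℝ (Fin d)) (b b' : ℕ) (hb : 1 ≤ b) (hb' : 1 ≤ b')
    (p : ℝ) (hp0 : 0 < p) (hp1 : p ≤ 1) :
    p * ((1 / (n : ℝ) ^ b) * ∑ i : Fin b → Fin n,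
        ‖((1 / (b : ℝ)) • ∑ k, gradient (f (i k)) x') - gradient F x'‖ ^ 2)
    + (1 - p) * ((1 / (n : ℝ) ^ b') * ∑ j : Fin b' → Fin n,
        ‖(g + (1 / (b' : ℝ)) • ∑ k, (gradient (f (j k)) x' - gradient (f (j k)) x))
          - gradient F x'‖ ^ 2)
      ≤ p * σ ^ 2 / (b : ℝ) + (1 - p) * L ^ 2 / (b' : ℝ) * ‖x' - x‖ ^ 2
        + (1 - p) * ‖g - gradient F x‖ ^ 2 := by
  have hn0 : (n : ℝ) ≠ 0 := Nat.cast_ne_zero.mpr (by omega)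
  have hb0 : (b : ℝ) ≠ 0 := Nat.cast_ne_zero.mpr (by omega)
  have hb'0 : (b' : ℝ) ≠ 0 := Nat.cast_ne_zero.mpr (by omega)
  have hgrad : ∀ y, gradient F y = (1 / (n : ℝ)) • ∑ i, gradient (f i) y := by
    intro y; rw [hF]; exact grad_avg f hf y
  set w1 : Fin n → EuclideanSpace ℝ (Fin d) :=
    fun j => gradient (f j) x' - gradient F x' with hw1def
  set a : Fin n → EuclideanSpace ℝ (Fin d) :=
    fun j => gradient (f j) x' - gradient (f j) x with hadef
  set abar : EuclideanSpace ℝ (Fin d) := gradient F x' - gradient F x with habar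
  set w2 : Fin n → EuclideanSpace ℝ (Fin d) := fun j => a j - abar with hw2def
  have hw1 : ∑ j, w1 j = 0 := by
    simp only [hw1def, Finset.sum_sub_distrib, Finset.sum_const, Finset.card_univ,
      Fintype.card_fin]
    rw [hgrad, ← Nat.cast_smul_eq_nsmul ℝ, smul_smul,
      show (n : ℝ) * (1 / n) = 1 by field_simp, one_smul, sub_self]
  have hsum_a : ∑ j, a j = (n : ℝ) • abar := by
    simp only [hadef, habar, Finset.sum_sub_distrib, smul_sub]
    rw [hgrad x', hgrad x, smul_smul, smul_smul,
      show (n : ℝ) * (1 / n) = 1 by field_simp, one_smul, one_smul]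
  have hw2 : ∑ j, w2 j = 0 := by
    simp only [hw2def, Finset.sum_sub_distrib, Finset.sum_const, Finset.card_univ,
      Fintype.card_fin, ← Nat.cast_smul_eq_nsmul ℝ, hsum_a]
    rw [habar, smul_sub]
    abel
  -- rewrite term 1
  have ht1 : ∀ i : Fin b → Fin n,
      ‖((1 / (b : ℝ)) • ∑ k, gradient (f (i k)) x') - gradient F x'‖ ^ 2
      = ‖(0 : EuclideanSpace ℝ (Fin d)) + (1 / (b : ℝ)) • ∑ k, w1 (i k)‖ ^ 2 := by
    intro i
    congr 1
    simp only [hw1def, Finset.sum_sub_distrib, smul_sub, Finset.sum_const, Finset.card_univ,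
      Fintype.card_fin, zero_add]
    rw [← Nat.cast_smul_eq_nsmul ℝ, smul_smul,
      show (1 / (b : ℝ)) * b = 1 by field_simp, one_smul]
  have ht2 : ∀ j : Fin b' → Fin n,
      ‖(g + (1 / (b' : ℝ)) • ∑ k, (gradient (f (j k)) x' - gradient (f (j k)) x))
          - gradient F x'‖ ^ 2
      = ‖(g - gradient F x) + (1 / (b' : ℝ)) • ∑ k, w2 (j k)‖ ^ 2 := by
    intro j
    congr 1
    have hkey : (1 / (b' : ℝ)) • ((b' : ℕ) • abar) = abar := by
      rw [← Nat.cast_smul_eq_nsmul ℝ, smul_smul,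
        show (1 / (b' : ℝ)) * b' = 1 by field_simp, one_smul]
    have hsw : ∑ k, w2 (j k) = (∑ k, a (j k)) - (b' : ℕ) • abar := by
      simp [hw2def, Finset.sum_sub_distrib]
    rw [hsw, smul_sub, hkey, habar]
    simp only [hadef]
    abel
  rw [Finset.sum_congr rfl fun i _ => ht1 i, Finset.sum_congr rfl fun j _ => ht2 j,
    aux_exp hn hb 0 w1 hw1, aux_exp hn hb' (g - gradient F x) w2 hw2]
  -- bounds
  have hbd1 : (1 / ((n : ℝ) * b)) * ∑ j, ‖w1 j‖ ^ 2 ≤ σ ^ 2 / b := by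
    have h := hbv x'
    have hbpos : (0 : ℝ) < b := by positivity
    rw [div_eq_mul_inv (σ ^ 2), show (1 : ℝ) / ((n : ℝ) * b) = (1 / n) * (b : ℝ)⁻¹ by
      field_simp]
    rw [mul_comm ((1 : ℝ) / n) ((b : ℝ)⁻¹), mul_assoc, mul_comm (σ ^ 2)]
    exact mul_le_mul_of_nonneg_left h (by positivity)
  have hbd2 : (1 / ((n : ℝ) * b')) * ∑ j, ‖w2 j‖ ^ 2 ≤ L ^ 2 / b' * ‖x' - x‖ ^ 2 := by
    have hvar : ∑ j, ‖w2 j‖ ^ 2 ≤ ∑ j, ‖a j‖ ^ 2 := by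
      have hexp : ∑ j, ‖w2 j‖ ^ 2
          = ∑ j, ‖a j‖ ^ 2 - (n : ℝ) * ‖abar‖ ^ 2 := by
        simp only [hw2def, norm_sub_sq_real]
        rw [Finset.sum_add_distrib, Finset.sum_sub_distrib, Finset.sum_const,
          Finset.card_univ, Fintype.card_fin, ← Finset.mul_sum, ← sum_inner, hsum_a,
          real_inner_smul_left, real_inner_self_eq_norm_sq, nsmul_eq_mul]
        ring
      have hpos : (0 : ℝ) ≤ (n : ℝ) * ‖abar‖ ^ 2 := by positivity
      linarith
    have h := havg x' x
    have : (1 / ((n : ℝ) * b')) * ∑ j, ‖w2 j‖ ^ 2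
        ≤ (1 / (b' : ℝ)) * ((1 / (n : ℝ)) * ∑ j, ‖a j‖ ^ 2) := by
      rw [show (1 : ℝ) / ((n : ℝ) * b') = (1 / b') * (1 / n) by field_simp, mul_assoc]
      have hmono : (1 / (n : ℝ)) * ∑ j, ‖w2 j‖ ^ 2 ≤ (1 / (n : ℝ)) * ∑ j, ‖a j‖ ^ 2 :=
        mul_le_mul_of_nonneg_left hvar (by positivity)
      exact mul_le_mul_of_nonneg_left hmono (by positivity)
    calc (1 / ((n : ℝ) * b')) * ∑ j, ‖w2 j‖ ^ 2
        ≤ (1 / (b' : ℝ)) * ((1 / (n : ℝ)) * ∑ j, ‖a j‖ ^ 2) := this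
      _ ≤ (1 / (b' : ℝ)) * (L ^ 2 * ‖x' - x‖ ^ 2) :=
          mul_le_mul_of_nonneg_left h (by positivity)
      _ = L ^ 2 / b' * ‖x' - x‖ ^ 2 := by ring
  have hp1' : (0 : ℝ) ≤ 1 - p := by linarith
  have e1 := mul_le_mul_of_nonneg_left hbd1 hp0.le
  have e2 := mul_le_mul_of_nonneg_left hbd2 hp1'
  simp only [norm_zero]
  ring_nf
  ring_nf at e1 e2
  linarith [e1, e2]
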